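/- Let α, β ∈ ℝ be such that 1, α, β are linearly independent over ℚ, and let φ_t(x, y, z) = (x + t, y + αt, z + βt) be the linear flow on (AddCircle (1:ℝ))³. Then for every point p ∈ (AddCircle 1)³, the ω-limit set ω(p) equals all of (AddCircle 1)³. -/

import Mathlib

/-- The linear flow with direction `(1, α, β)` on the 3-torus `(ℝ/ℤ)³`. -/
noncomputable def linearFlowT3 (α β : ℝ) (t : ℝ)
    (q : AddCircle (1 : ℝ) × AddCircle (1 : ℝ) × AddCircle (1 : ℝ)) :
    AddCircle (1 : ℝ) × AddCircle (1 : ℝ) × AddCircle (1 : ℝ) :=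
  (q.1 + (t : AddCircle (1 : ℝ)), q.2.1 + ((α * t : ℝ) : AddCircle (1 : ℝ)),
    q.2.2 + ((β * t : ℝ) : AddCircle (1 : ℝ)))

open Filter Set Submodule


/-- Consequence of ℚ-linear independence of `1, α, β`: no nontrivial integer relation
`p*α + q*β = r`. -/
lemma indep_rel {α β : ℝ} (h : LinearIndependent ℚ ![(1 : ℝ), α, β])
    {p q r : ℤ} (hrel : (p : ℝ) * α + (q : ℝ) * β = (r : ℝ)) : p = 0 ∧ q = 0 := by
  have h' := Fintype.linearIndependent_iff.mp h ![(-r : ℚ), (p : ℚ), (q : ℚ)]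
  have hsum : ∑ i, (![(-r : ℚ), (p : ℚ), (q : ℚ)] i) • (![(1 : ℝ), α, β] i) = 0 := by
    simp [Fin.sum_univ_three, Rat.smul_def]
    push_cast
    linarith [hrel]
  have h0 := h' hsum 1
  have h1 := h' hsum 2
  simp at h0 h1
  exact ⟨by exact_mod_cast h0, by exact_mod_cast h1⟩

/-- The subgroup `ℤ(α,β) + ℤ²` of `ℝ²`. -/
def kronGroup (α β : ℝ) : AddSubgroup (ℝ × ℝ) where
  carrier := {x | ∃ n m k : ℤ, x = (α * n + m, β * n + k)}
  zero_mem' := ⟨0, 0, 0, by simp; rfl⟩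
  add_mem' := by
    rintro x y ⟨n, m, k, rfl⟩ ⟨n', m', k', rfl⟩
    exact ⟨n + n', m + m', k + k', by push_cast; rw [Prod.ext_iff]; constructor <;> simp <;> ring⟩
  neg_mem' := by
    rintro x ⟨n, m, k, rfl⟩
    exact ⟨-n, -m, -k, by push_cast; rw [Prod.ext_iff]; constructor <;> simp <;> ring⟩

lemma mem_kronGroup_ab (α β : ℝ) : ((α, β) : ℝ × ℝ) ∈ kronGroup α β :=
  ⟨1, 0, 0, by push_cast; simp⟩

lemma mem_kronGroup_e1 (α β : ℝ) : ((1, 0) : ℝ × ℝ) ∈ kronGroup α β :=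
  ⟨0, 1, 0, by push_cast; simp⟩

lemma mem_kronGroup_e2 (α β : ℝ) : ((0, 1) : ℝ × ℝ) ∈ kronGroup α β :=
  ⟨0, 0, 1, by push_cast; simp⟩

lemma mem_kronGroup (α β : ℝ) {x : ℝ × ℝ} (hx : x ∈ kronGroup α β) :
    ∃ n m k : ℤ, x = (α * n + m, β * n + k) := hx

/-- A closed subgroup of `ℝ²` with elements arbitrarily close to (but distinct from) `0`
contains a whole line. -/
lemma line_of_small_elements (C : AddSubgroup (ℝ × ℝ)) (hC : IsClosed (C : Set (ℝ × ℝ)))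
    (h : ∀ ε : ℝ, 0 < ε → ∃ c ∈ C, c ≠ 0 ∧ ‖c‖ < ε) :
    ∃ w : ℝ × ℝ, w ≠ 0 ∧ ∀ t : ℝ, t • w ∈ C := by
  choose c hcC hc0 hcs using fun n : ℕ => h (1 / (n + 1)) (by positivity)
  set u : ℕ → ℝ × ℝ := fun n => ‖c n‖⁻¹ • c n with hu
  have hnorm : ∀ n, ‖c n‖ ≠ 0 := fun n => norm_ne_zero_iff.mpr (hc0 n)
  have husph : ∀ n, u n ∈ Metric.sphere (0 : ℝ × ℝ) 1 := by
    intro n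
    simp [hu, norm_smul, abs_of_nonneg (inv_nonneg.mpr (norm_nonneg (c n))),
      inv_mul_cancel₀ (hnorm n)]
  obtain ⟨w, hwsph, φ, hφ, hconv⟩ :=
    (isCompact_sphere (0 : ℝ × ℝ) 1).tendsto_subseq husph
  have hw0 : w ≠ 0 := by
    intro hw
    rw [hw] at hwsph
    simp at hwsph
  refine ⟨w, hw0, fun t => ?_⟩
  have hnorm_pos : ∀ n, (0:ℝ) < ‖c (φ n)‖ := fun n =>
    lt_of_le_of_ne (norm_nonneg _) (Ne.symm (hnorm (φ n)))
  have hnorm_lt : ∀ n, ‖c (φ n)‖ < 1 / (n + 1) := by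
    intro n
    refine lt_of_lt_of_le (hcs (φ n)) (one_div_le_one_div_of_le (by positivity) ?_)
    have : n ≤ φ n := hφ.le_apply
    push_cast
    exact_mod_cast by linarith [this]
  have hnorm_to : Tendsto (fun n => ‖c (φ n)‖) atTop (nhds 0) := by
    refine squeeze_zero (fun n => (norm_nonneg _)) (fun n => (hnorm_lt n).le) ?_
    exact tendsto_one_div_add_atTop_nhds_zero_nat
  -- scalars
  set s : ℕ → ℝ := fun n => (⌊t / ‖c (φ n)‖⌋ : ℝ) * ‖c (φ n)‖ with hs
  have hmem : ∀ n, ⌊t / ‖c (φ n)‖⌋ • c (φ n) ∈ C := fun n =>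
    AddSubgroup.zsmul_mem C (hcC (φ n)) _
  have heq : ∀ n, (⌊t / ‖c (φ n)‖⌋ • c (φ n) : ℝ × ℝ) = s n • u (φ n) := by
    intro n
    rw [hs, hu]
    simp only [← Int.cast_smul_eq_zsmul ℝ, smul_smul]
    congr 1
    rw [mul_assoc, mul_inv_cancel₀ (hnorm (φ n)), mul_one]
  have hst : Tendsto s atTop (nhds t) := by
    have hub : ∀ n, s n ≤ t := by
      intro n
      have := Int.floor_le (t / ‖c (φ n)‖)
      calc s n ≤ (t / ‖c (φ n)‖) * ‖c (φ n)‖ :=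
            mul_le_mul_of_nonneg_right this (norm_nonneg _)
        _ = t := div_mul_cancel₀ t (hnorm (φ n))
    have hlb : ∀ n, t - ‖c (φ n)‖ ≤ s n := by
      intro n
      have h1 : t / ‖c (φ n)‖ - 1 ≤ (⌊t / ‖c (φ n)‖⌋ : ℝ) := by
        linarith [Int.lt_floor_add_one (t / ‖c (φ n)‖)]
      have := mul_le_mul_of_nonneg_right h1 (norm_nonneg (c (φ n)))
      calc t - ‖c (φ n)‖ = (t / ‖c (φ n)‖ - 1) * ‖c (φ n)‖ := by
            rw [sub_mul, one_mul, div_mul_cancel₀ t (hnorm (φ n))]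
        _ ≤ s n := this
    refine tendsto_of_tendsto_of_tendsto_of_le_of_le ?_ ?_ hlb hub
    · simpa using (tendsto_const_nhds (x := t)).sub hnorm_to
    · exact tendsto_const_nhds
  have hlim : Tendsto (fun n => s n • (u ∘ φ) n) atTop (nhds (t • w)) := hst.smul hconv
  have : t • w ∈ closure (C : Set (ℝ × ℝ)) := by
    refine mem_closure_of_tendsto hlim ?_
    filter_upwards with n
    show s n • u (φ n) ∈ (C : Set (ℝ × ℝ))
    rw [← heq n]
    exact hmem n
  rwa [hC.closure_eq] at this


/-- If the closed subgroup containing `(α,β), (1,0), (0,1)` were discrete, we would get an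
integer relation, contradicting independence. -/
lemma not_discrete {α β : ℝ} (h : LinearIndependent ℚ ![(1 : ℝ), α, β])
    (C : AddSubgroup (ℝ × ℝ))
    (hab : ((α, β) : ℝ × ℝ) ∈ C) (he1 : ((1, 0) : ℝ × ℝ) ∈ C) (he2 : ((0, 1) : ℝ × ℝ) ∈ C)
    (ε : ℝ) (hε : 0 < ε) (hdisc : ∀ c ∈ C, ‖c‖ < ε → c = 0) : False := by
  set L : Submodule ℤ (ℝ × ℝ) := span ℤ ({((α, β) : ℝ × ℝ), (1, 0), (0, 1)} : Set (ℝ × ℝ)) with hL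
  have hLC : (L : Set (ℝ × ℝ)) ⊆ (C : Set (ℝ × ℝ)) := by
    intro x hx
    induction hx using Submodule.span_induction with
    | mem x hx =>
      rcases hx with rfl | rfl | rfl
      exacts [hab, he1, he2]
    | zero => exact C.zero_mem
    | add x y _ _ hx hy => exact C.add_mem hx hy
    | smul z x _ hx => exact C.zsmul_mem hx z
  haveI : DiscreteTopology L := by
    refine discreteTopology_of_isOpen_singleton_zero ?_
    have : ({0} : Set L) = (Subtype.val) ⁻¹' (Metric.ball (0 : ℝ × ℝ) ε) := by
      ext x
      simp only [mem_singleton_iff, mem_preimage, Metric.mem_ball, dist_zero_right]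
      constructor
      · rintro rfl; simpa using hε
      · intro hx
        exact Subtype.ext (hdisc _ (hLC x.2) hx)
    rw [this]
    exact (Metric.isOpen_ball).preimage continuous_subtype_val
  haveI : IsZLattice ℝ L := by
    constructor
    rw [eq_top_iff]
    rintro ⟨x, y⟩ -
    have h1 : ((1, 0) : ℝ × ℝ) ∈ (L : Set (ℝ × ℝ)) := subset_span (by simp)
    have h2 : ((0, 1) : ℝ × ℝ) ∈ (L : Set (ℝ × ℝ)) := subset_span (by simp)
    have : ((x, y) : ℝ × ℝ) = x • ((1, 0) : ℝ × ℝ) + y • ((0, 1) : ℝ × ℝ) := by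
      simp [Prod.ext_iff]
    rw [this]
    exact add_mem (smul_mem _ x (subset_span h1)) (smul_mem _ y (subset_span h2))
  have hrank : Module.finrank ℤ L = 2 := by
    rw [ZLattice.rank ℝ L]
    simp [Module.finrank_prod]
  -- three independent vectors in L
  have hindepR : LinearIndependent ℤ ![((α, β) : ℝ × ℝ), (1, 0), (0, 1)] := by
    rw [Fintype.linearIndependent_iff]
    intro g hg
    have hg' : (g 0 : ℝ) • ((α, β) : ℝ × ℝ) + (g 1 : ℝ) • ((1, 0) : ℝ × ℝ)
        + (g 2 : ℝ) • ((0, 1) : ℝ × ℝ) = 0 := by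
      have := hg
      simp only [Fin.sum_univ_three] at this
      simpa [← Int.cast_smul_eq_zsmul ℝ] using this
    have hc1 : (g 0 : ℝ) * α + (g 1 : ℝ) = 0 := by
      have := congrArg Prod.fst hg'
      simpa using this
    have hc2 : (g 0 : ℝ) * β + (g 2 : ℝ) = 0 := by
      have := congrArg Prod.snd hg'
      simpa using this
    have hrel : ((g 0 : ℤ) : ℝ) * α + ((0 : ℤ) : ℝ) * β = ((-(g 1) : ℤ) : ℝ) := by
      push_cast
      linarith
    obtain ⟨h0, -⟩ := indep_rel h hrel
    intro i
    fin_cases i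
    · exact h0
    · have : (g 1 : ℝ) = 0 := by rw [h0] at hc1; simpa using hc1
      exact_mod_cast this
    · have : (g 2 : ℝ) = 0 := by
        rw [h0] at hc2; simpa using hc2
      exact_mod_cast this
  have hmemL : ∀ i : Fin 3, (![((α, β) : ℝ × ℝ), (1, 0), (0, 1)] i) ∈ L := by
    intro i
    fin_cases i <;> exact subset_span (by simp)
  set f : Fin 3 → L := fun i => ⟨_, hmemL i⟩ with hf
  have hindepL : LinearIndependent ℤ f := by
    apply LinearIndependent.of_comp L.subtype
    convert hindepR
    rfl
  have := hindepL.fintype_card_le_finrank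
  rw [hrank] at this
  simp at this


lemma dense_of_line {α β : ℝ} (h : LinearIndependent ℚ ![(1 : ℝ), α, β])
    (C : AddSubgroup (ℝ × ℝ)) (hC : IsClosed (C : Set (ℝ × ℝ)))
    (hab : ((α, β) : ℝ × ℝ) ∈ C) (he1 : ((1, 0) : ℝ × ℝ) ∈ C) (he2 : ((0, 1) : ℝ × ℝ) ∈ C)
    {w : ℝ × ℝ} (hw : w ≠ 0) (hline : ∀ t : ℝ, t • w ∈ C) :
    Dense (C : Set (ℝ × ℝ)) := by
  -- the linear functional with kernel ℝw
  set g : ℝ × ℝ →+ ℝ := AddMonoidHom.mk' (fun x => w.2 * x.1 - w.1 * x.2)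
    (by intro a b; simp [Prod.fst_add, Prod.snd_add]; ring) with hg
  set G : AddSubgroup ℝ := AddSubgroup.map g C with hG
  have hD : (0:ℝ) < w.1 ^ 2 + w.2 ^ 2 := by
    rcases Prod.mk.injEq .. ▸ (fun hq => hw (Prod.ext_iff.mpr hq)) with -
    have := hw
    by_contra hle
    push_neg at hle
    have h1 : w.1 = 0 := by nlinarith [sq_nonneg w.1, sq_nonneg w.2]
    have h2 : w.2 = 0 := by nlinarith [sq_nonneg w.1, sq_nonneg w.2]
    exact hw (Prod.ext_iff.mpr ⟨h1, h2⟩)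
  rcases G.dense_or_cyclic with hdense | ⟨a, ha⟩
  · -- dense functional image ⇒ C dense
    intro v
    rw [Metric.mem_closure_iff]
    intro ε hε
    set K : ℝ := (|w.1| + |w.2|) / (w.1 ^ 2 + w.2 ^ 2) with hK
    have hK0 : 0 ≤ K := by positivity
    have hε' : 0 < ε / (K + 1) := by positivity
    -- pick c ∈ C with g c close to g v
    have : g v ∈ closure (G : Set ℝ) := hdense _
    rw [Metric.mem_closure_iff] at this
    obtain ⟨y, hyG, hy⟩ := this _ hε'
    obtain ⟨c, hcC, rfl⟩ := hyG
    set x : ℝ × ℝ := v - c with hx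
    set t : ℝ := (x.1 * w.1 + x.2 * w.2) / (w.1 ^ 2 + w.2 ^ 2) with ht
    refine ⟨c + t • w, C.add_mem hcC (hline t), ?_⟩
    have hgx : g x = g v - g c := by rw [hx, map_sub]
    have hkey1 : v.1 - (c + t • w).1 = w.2 * g x / (w.1 ^ 2 + w.2 ^ 2) := by
      simp only [hg, AddMonoidHom.mk'_apply, hx, ht, Prod.fst_add, Prod.smul_fst,
        Prod.fst_sub, smul_eq_mul]
      field_simp
      ring
    have hkey2 : v.2 - (c + t • w).2 = -w.1 * g x / (w.1 ^ 2 + w.2 ^ 2) := by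
      simp only [hg, AddMonoidHom.mk'_apply, hx, ht, Prod.snd_add, Prod.smul_snd,
        Prod.snd_sub, smul_eq_mul]
      field_simp
      ring
    have hgxs : |g x| < ε / (K + 1) := by
      rw [hgx]
      rw [Real.dist_eq] at hy
      exact hy
    have hmain : ∀ wi : ℝ, |wi| ≤ |w.1| + |w.2| → |wi| * |g x| / (w.1 ^ 2 + w.2 ^ 2) < ε := by
      intro wi hwi
      have h1 : |wi| * |g x| / (w.1 ^ 2 + w.2 ^ 2) ≤ K * |g x| := by
        rw [hK, div_mul_eq_mul_div]
        gcongr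
      have h2 : K * |g x| ≤ K * (ε / (K + 1)) := mul_le_mul_of_nonneg_left hgxs.le hK0
      have h3 : K * (ε / (K + 1)) < ε := by
        have hlt : K / (K + 1) < 1 := (div_lt_one (by positivity)).mpr (by linarith)
        calc K * (ε / (K + 1)) = ε * (K / (K + 1)) := by ring
          _ < ε := mul_lt_of_lt_one_right hε hlt
      linarith
    rw [Prod.dist_eq]
    have hb1 : dist v.1 (c + t • w).1 < ε := by
      rw [Real.dist_eq, hkey1, abs_div, abs_of_pos hD, abs_mul]
      exact hmain _ (le_add_of_nonneg_left (abs_nonneg _))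
    have hb2 : dist v.2 (c + t • w).2 < ε := by
      rw [Real.dist_eq, hkey2, abs_div, abs_of_pos hD, abs_mul, abs_neg]
      exact hmain _ (le_add_of_nonneg_right (abs_nonneg _))
    exact max_lt hb1 hb2
  · -- cyclic image ⇒ contradiction with independence
    exfalso
    have hmem : ∀ x ∈ C, ∃ z : ℤ, z • a = g x := by
      intro x hx
      have : g x ∈ G := ⟨x, hx, rfl⟩
      rw [ha, AddSubgroup.mem_closure_singleton] at this
      exact this
    obtain ⟨r, hr⟩ := hmem _ hab
    obtain ⟨p, hp⟩ := hmem _ he1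
    obtain ⟨q, hq⟩ := hmem _ he2
    simp only [hg, AddMonoidHom.mk'_apply, zsmul_eq_mul] at hr hp hq
    -- g(1,0) = w.2, g(0,1) = -w.1
    have hp' : (p : ℝ) * a = w.2 := by simpa using hp
    have hq' : (q : ℝ) * a = -w.1 := by simpa using hq
    have hr' : (r : ℝ) * a = w.2 * α - w.1 * β := by simpa using hr
    by_cases ha0 : a = 0
    · apply hw
      rw [ha0] at hp' hq'
      simp at hp' hq'
      rw [Prod.ext_iff]
      refine ⟨?_, ?_⟩ <;> simp <;> linarith
    · have hrel : (p : ℝ) * α + (q : ℝ) * β = (r : ℝ) := by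
        have : a * ((p : ℝ) * α + (q : ℝ) * β - r) = 0 := by
          linear_combination α * hp' + β * hq' - hr'
        rcases mul_eq_zero.mp this with h1 | h2
        · exact absurd h1 ha0
        · linarith
      obtain ⟨hp0, hq0⟩ := indep_rel h hrel
      apply hw
      rw [hp0] at hp'
      rw [hq0] at hq'
      simp at hp' hq'
      rw [Prod.ext_iff]
      refine ⟨?_, ?_⟩ <;> simp <;> linarith


/-- Two-dimensional Kronecker theorem. -/
lemma kron_dense {α β : ℝ} (h : LinearIndependent ℚ ![(1 : ℝ), α, β]) :
    Dense ((kronGroup α β : AddSubgroup (ℝ × ℝ)) : Set (ℝ × ℝ)) := by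
  set C : AddSubgroup (ℝ × ℝ) := (kronGroup α β).topologicalClosure with hCdef
  have hsub : (kronGroup α β : Set (ℝ × ℝ)) ⊆ (C : Set (ℝ × ℝ)) :=
    (kronGroup α β).le_topologicalClosure
  have hab : ((α, β) : ℝ × ℝ) ∈ C := hsub (mem_kronGroup_ab α β)
  have he1 : ((1, 0) : ℝ × ℝ) ∈ C := hsub (mem_kronGroup_e1 α β)
  have he2 : ((0, 1) : ℝ × ℝ) ∈ C := hsub (mem_kronGroup_e2 α β)
  have hCc : IsClosed (C : Set (ℝ × ℝ)) := (kronGroup α β).isClosed_topologicalClosure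
  by_cases hsm : ∀ ε : ℝ, 0 < ε → ∃ c ∈ C, c ≠ 0 ∧ ‖c‖ < ε
  · obtain ⟨w, hw, hline⟩ := line_of_small_elements C hCc hsm
    have hdense : Dense (C : Set (ℝ × ℝ)) := dense_of_line h C hCc hab he1 he2 hw hline
    have : (C : Set (ℝ × ℝ)) = closure (kronGroup α β : Set (ℝ × ℝ)) := rfl
    rw [this, dense_closure] at hdense
    exact hdense
  · exfalso
    push_neg at hsm
    obtain ⟨ε, hε, hd⟩ := hsm
    refine not_discrete h C hab he1 he2 ε hε ?_
    intro c hc hcε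
    by_contra hc0
    exact absurd hcε (hd c hc hc0).not_gt

/-- Density of the lifted orbit set in `ℝ³`. -/
lemma dense_lift {α β : ℝ} (h : LinearIndependent ℚ ![(1 : ℝ), α, β]) :
    Dense {x : ℝ × ℝ × ℝ | ∃ t : ℝ, ∃ n m k : ℤ,
      x = (t + n, α * t + m, β * t + k)} := by
  rw [Metric.dense_iff]
  rintro ⟨x, y, z⟩ r hr
  -- approximate (y - αx, z - βx) by an element of the Kronecker group
  have := kron_dense h (y - α * x, z - β * x)
  rw [Metric.mem_closure_iff] at this
  obtain ⟨γ, hγ, hdist⟩ := this r hr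
  obtain ⟨n, m, k, rfl⟩ := mem_kronGroup α β hγ
  refine ⟨(x, α * x + (α * n + m), β * x + (β * n + k)), ?_, ⟨x + n, -n, m, k, ?_⟩⟩
  · rw [Metric.mem_ball]
    rw [Prod.dist_eq, Prod.dist_eq]
    rw [Prod.dist_eq] at hdist
    simp only [Real.dist_eq] at hdist ⊢
    have h1 : |x - x| = 0 := by simp
    refine max_lt (by simpa using hr) (max_lt ?_ ?_)
    · have := lt_of_le_of_lt (le_max_left _ _) hdist
      calc |α * x + (α * n + m) - y| = |y - α * x - (α * ↑n + ↑m)| := by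
            rw [abs_sub_comm]; ring_nf
        _ < r := this
    · have := lt_of_le_of_lt (le_max_right _ _) hdist
      calc |β * x + (β * n + k) - z| = |z - β * x - (β * ↑n + ↑k)| := by
            rw [abs_sub_comm]; ring_nf
        _ < r := this
  · push_cast
    refine Prod.ext ?_ (Prod.ext ?_ ?_) <;> simp <;> ring

lemma intCast_coe_zero (n : ℤ) : ((n : ℝ) : AddCircle (1 : ℝ)) = 0 := by
  rw [AddCircle.coe_eq_zero_iff]
  exact ⟨n, by simp⟩

/-- Density of each orbit of the linear flow. -/
lemma dense_orbit {α β : ℝ} (h : LinearIndependent ℚ ![(1 : ℝ), α, β])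
    (q : AddCircle (1 : ℝ) × AddCircle (1 : ℝ) × AddCircle (1 : ℝ)) :
    Dense (range fun t : ℝ => linearFlowT3 α β t q) := by
  set π : ℝ × ℝ × ℝ → AddCircle (1 : ℝ) × AddCircle (1 : ℝ) × AddCircle (1 : ℝ) :=
    fun x => (q.1 + (x.1 : AddCircle (1 : ℝ)), q.2.1 + (x.2.1 : AddCircle (1 : ℝ)),
      q.2.2 + (x.2.2 : AddCircle (1 : ℝ))) with hπ
  have hcoe : Continuous (fun r : ℝ => (r : AddCircle (1 : ℝ))) := AddCircle.continuous_mk' 1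
  have hπc : Continuous π := by
    refine Continuous.prodMk ?_ (Continuous.prodMk ?_ ?_)
    · exact continuous_const.add (hcoe.comp continuous_fst)
    · exact continuous_const.add (hcoe.comp (continuous_fst.comp continuous_snd))
    · exact continuous_const.add (hcoe.comp (continuous_snd.comp continuous_snd))
  have hπs : Function.Surjective π := by
    have hsur : Function.Surjective (fun r : ℝ => (r : AddCircle (1 : ℝ))) :=
      fun y => QuotientAddGroup.induction_on y fun z => ⟨z, rfl⟩
    rintro ⟨a, b, c⟩
    obtain ⟨a', ha'⟩ := hsur (a - q.1)
    obtain ⟨b', hb'⟩ := hsur (b - q.2.1)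
    obtain ⟨c', hc'⟩ := hsur (c - q.2.2)
    refine ⟨(a', b', c'), ?_⟩
    simp only [hπ, ha', hb', hc']
    refine Prod.ext ?_ (Prod.ext ?_ ?_) <;> simp
  have hdense : Dense (π '' {x : ℝ × ℝ × ℝ | ∃ t : ℝ, ∃ n m k : ℤ,
      x = (t + n, α * t + m, β * t + k)}) :=
    hπs.denseRange.dense_image hπc (dense_lift h)
  refine hdense.mono ?_
  rintro - ⟨x, ⟨t, n, m, k, rfl⟩, rfl⟩
  refine ⟨t, ?_⟩
  simp only [linearFlowT3, hπ]
  push_cast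
  simp only [AddCircle.coe_add, intCast_coe_zero, add_zero]

/-- The linear flow as a `Flow`. -/
noncomputable def linearFlowT3' (α β : ℝ) :
    Flow ℝ (AddCircle (1 : ℝ) × AddCircle (1 : ℝ) × AddCircle (1 : ℝ)) where
  toFun := linearFlowT3 α β
  cont' := by
    have hcoe : Continuous (fun r : ℝ => (r : AddCircle (1 : ℝ))) := AddCircle.continuous_mk' 1
    refine Continuous.prodMk ?_ (Continuous.prodMk ?_ ?_)
    · exact (continuous_fst.comp continuous_snd).add (hcoe.comp continuous_fst)
    · exact ((continuous_fst.comp (continuous_snd.comp continuous_snd))).add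
        (hcoe.comp (continuous_const.mul continuous_fst))
    · exact ((continuous_snd.comp (continuous_snd.comp continuous_snd))).add
        (hcoe.comp (continuous_const.mul continuous_fst))
  map_add' := by
    intro t₁ t₂ x
    simp only [linearFlowT3, mul_add, AddCircle.coe_add]
    refine Prod.ext ?_ (Prod.ext ?_ ?_) <;> simp <;> abel
  map_zero' := by
    intro x
    simp [linearFlowT3]


/-- if `1, α, β` are linearly independent over `ℚ`, the ω-limit set of
every point of the 3-torus under the linear flow with direction `(1, α, β)` is the
whole 3-torus. -/
theorem linear_flow_T3_omegaLimit_univ (α β : ℝ)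
    (h : LinearIndependent ℚ ![(1 : ℝ), α, β])
    (p : AddCircle (1 : ℝ) × AddCircle (1 : ℝ) × AddCircle (1 : ℝ)) :
    omegaLimit Filter.atTop (linearFlowT3 α β) {p} = Set.univ := by
  haveI : Fact ((0 : ℝ) < 1) := ⟨one_pos⟩
  have hcoe : ⇑(linearFlowT3' α β) = linearFlowT3 α β := rfl
  have hne : (omegaLimit atTop (linearFlowT3 α β) {p}).Nonempty :=
    nonempty_omegaLimit atTop (linearFlowT3 α β) {p} (singleton_nonempty p)
  obtain ⟨q, hq⟩ := hne
  have hinv : IsInvariant (linearFlowT3 α β) (omegaLimit atTop (linearFlowT3 α β) {p}) := by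
    rw [← hcoe]
    exact Flow.isInvariant_omegaLimit atTop (linearFlowT3' α β) {p}
      (fun t => tendsto_atTop_add_const_left atTop t tendsto_id)
  have horb : range (fun t : ℝ => linearFlowT3 α β t q) ⊆
      omegaLimit atTop (linearFlowT3 α β) {p} := by
    rw [range_subset_iff]
    exact fun t => hinv t hq
  have hcl : closure (range fun t : ℝ => linearFlowT3 α β t q) ⊆
      omegaLimit atTop (linearFlowT3 α β) {p} :=
    (isClosed_omegaLimit atTop (linearFlowT3 α β) {p}).closure_subset_iff.mpr horb
  rw [(dense_orbit h q).closure_eq] at hcl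
  exact eq_univ_of_univ_subset hcl
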